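/- arXiv:1301.5596 — 4 statements merged into one kernel-verified Lean document; each statement's English description precedes it below -/
import Mathlib

section
/- Let V be an n×n matrix over a field such that every square submatrix of V has nonzero determinant, and let UV = I. Then the linear code generated by any r rows of U, with parity check given by the corresponding n−r columns of V, has minimum distance n−r+1; i.e., every nonzero vector u in the row space of U's chosen r rows has Hamming weight at least n−r+1. -/
theorem unit_derived_code_mds {n r : ℕ} {K : Type*} [Field K] [DecidableEq K]
    (U V : Matrix (Fin n) (Fin n) K) (hUV : U * V = 1)
    (hcheb : ∀ (m : ℕ) (f g : Fin m → Fin n), 0 < m → Function.Injective f →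
      Function.Injective g → (V.submatrix f g).det ≠ 0)
    (R : Finset (Fin n)) (hR : R.card = r)
    (u : Fin n → K) (hu : u ∈ Submodule.span K ((fun i => U i) '' (R : Set (Fin n))))
    (hu0 : u ≠ 0) :
    n - r + 1 ≤ hammingNorm u := by
  -- Step 1: uV vanishes off R
  have key : ∀ j ∉ R, Matrix.vecMul u V j = 0 := by
    intro j hj
    refine Submodule.span_induction (p := fun x _ => Matrix.vecMul x V j = 0)
      ?_ ?_ ?_ ?_ hu
    · rintro x ⟨i, hi, rfl⟩
      have h1 : Matrix.vecMul (U i) V j = (U * V) i j := rfl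
      rw [h1, hUV, Matrix.one_apply_ne]
      rintro rfl; exact hj hi
    · simp [Matrix.vecMul]
    · intro x y _ _ hx hy; rw [Matrix.add_vecMul]; simp [hx, hy]
    · intro a x _ hx; rw [Matrix.smul_vecMul]; simp [hx]
  by_contra hlt
  push_neg at hlt
  set m := hammingNorm u with hm
  have hmle : m ≤ n - r := by omega
  have hm0 : 0 < m := Nat.pos_of_ne_zero fun h => hu0 (hammingNorm_eq_zero.mp h)
  set S : Finset (Fin n) := Finset.univ.filter (fun i => u i ≠ 0) with hS
  have hScard : S.card = m := rfl
  have hRc : Rᶜ.card = n - r := by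
    rw [Finset.card_compl, hR, Fintype.card_fin]
  obtain ⟨C, hCsub, hCcard⟩ := Finset.exists_subset_card_eq (hRc ▸ hmle : m ≤ Rᶜ.card)
  set f : Fin m → Fin n := fun i => (S.orderIsoOfFin hScard i : Fin n) with hf
  set g : Fin m → Fin n := fun i => (C.orderIsoOfFin hCcard i : Fin n) with hg
  have hfinj : Function.Injective f := fun a b h =>
    (S.orderIsoOfFin hScard).injective (Subtype.coe_injective h)
  have hginj : Function.Injective g := fun a b h =>
    (C.orderIsoOfFin hCcard).injective (Subtype.coe_injective h)
  have hfS : ∀ i, f i ∈ S := fun i => (S.orderIsoOfFin hScard i).2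
  have hgC : ∀ i, g i ∈ C := fun i => (C.orderIsoOfFin hCcard i).2
  set M : Matrix (Fin m) (Fin m) K := V.submatrix f g with hM
  set w : Fin m → K := fun i => u (f i) with hw
  have hwM : Matrix.vecMul w M = 0 := by
    funext k
    have : Matrix.vecMul w M k = ∑ i : Fin m, u (f i) * V (f i) (g k) := by
      simp [Matrix.vecMul, dotProduct, hM, hw]
    rw [this]
    have himg : ∑ i : Fin m, u (f i) * V (f i) (g k) = ∑ i ∈ S, u i * V i (g k) := by
      rw [Finset.sum_bij (fun i _ => f i)]
      · intro i _; exact hfS i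
      · intro a _ b _ h; exact hfinj h
      · intro b hb
        obtain ⟨a, ha⟩ := (S.orderIsoOfFin hScard).surjective ⟨b, hb⟩
        exact ⟨a, Finset.mem_univ a, congrArg Subtype.val ha⟩
      · intro a _; rfl
    rw [himg]
    have hfull : ∑ i ∈ S, u i * V i (g k) = ∑ i : Fin n, u i * V i (g k) := by
      apply Finset.sum_subset (Finset.subset_univ S)
      intro x _ hx
      have : u x = 0 := by
        by_contra h
        exact hx (Finset.mem_filter.mpr ⟨Finset.mem_univ x, h⟩)
      simp [this]
    rw [hfull]
    have : ∑ i : Fin n, u i * V i (g k) = Matrix.vecMul u V (g k) := by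
      simp [Matrix.vecMul, dotProduct]
    rw [this]
    exact key (g k) (by simpa using hCsub (hgC k))
  have hdet : M.det ≠ 0 := hcheb m f g hm0 hfinj hginj
  have hMunit : IsUnit M.det := isUnit_iff_ne_zero.mpr hdet
  have hw0 : w = 0 := by
    have := congrArg (fun v => Matrix.vecMul v M⁻¹) hwM
    simpa [Matrix.vecMul_vecMul, Matrix.mul_nonsing_inv M hMunit] using this
  have : u (f ⟨0, hm0⟩) ≠ 0 := by
    have := hfS ⟨0, hm0⟩
    rw [hS, Finset.mem_filter] at this
    exact this.2
  exact this (congrFun hw0 ⟨0, hm0⟩)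
end

section
/- (Chebotarëv) Let p be a prime and ω ∈ ℂ a primitive p-th root of unity. Then every square submatrix of the p×p matrix V with (i,j)-entry ω^{ij} (0 ≤ i,j ≤ p−1) has nonzero determinant. -/
open Finset Polynomial

namespace ChebAux

lemma strictMono_le_apply {m : ℕ} {f : Fin m → ℕ} (hf : StrictMono f) (k : Fin m) :
    (k : ℕ) ≤ f k := by
  obtain ⟨n, hn⟩ := k
  induction n with
  | zero => simp
  | succ n ih =>
      have h1 : (⟨n, by omega⟩ : Fin m) < ⟨n + 1, hn⟩ := by simp [Fin.lt_def]
      have h2 := hf h1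
      have h3 := ih (by omega)
      simpa using Nat.lt_of_le_of_lt h3 h2

lemma sum_le_of_injective {m : ℕ} {c : Fin m → ℕ} (hc : Function.Injective c) :
    (∑ i ∈ range m, i) ≤ ∑ i : Fin m, c i ∧
      ((∑ i : Fin m, c i) = (∑ i ∈ range m, i) →
        ∃ τ : Equiv.Perm (Fin m), ∀ i, c i = τ i) := by
  classical
  set s : Finset ℕ := Finset.univ.image c with hs
  have hcard : s.card = m := by
    rw [hs, Finset.card_image_of_injective _ hc, Finset.card_univ, Fintype.card_fin]
  set e := s.orderEmbOfFin hcard with he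
  have himg : Finset.univ.image (fun k => e k) = s := by
    apply Finset.coe_injective
    rw [Finset.coe_image, Finset.coe_univ, Set.image_univ]
    exact s.range_orderEmbOfFin hcard
  have hsum1 : ∑ i : Fin m, c i = ∑ v ∈ s, v := by
    rw [hs, Finset.sum_image (fun i _ j _ h => hc h)]
  have hsum2 : ∑ v ∈ s, v = ∑ k : Fin m, (e k : ℕ) := by
    rw [← himg, Finset.sum_image]
    intro i _ j _ h
    exact e.injective h
  have hle : ∀ k : Fin m, (k : ℕ) ≤ e k := strictMono_le_apply e.strictMono
  have hge : (∑ i ∈ range m, i) ≤ ∑ k : Fin m, (e k : ℕ) := by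
    rw [← Fin.sum_univ_eq_sum_range]
    exact Finset.sum_le_sum fun k _ => hle k
  constructor
  · rw [hsum1, hsum2]; exact hge
  · intro heq
    have heq2 : ∑ k : Fin m, (e k : ℕ) = ∑ k : Fin m, (k : ℕ) := by
      rw [← hsum2, ← hsum1, heq, ← Fin.sum_univ_eq_sum_range (fun i => i) m]
    have hptw : ∀ k : Fin m, k ∈ Finset.univ → (e k : ℕ) = (k : ℕ) := by
      intro k _
      have := (Finset.sum_eq_sum_iff_of_le (fun k _ => hle k)).mp heq2.symm k (Finset.mem_univ k)
      omega
    have hlt : ∀ i : Fin m, c i < m := by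
      intro i
      have hmem : c i ∈ s := by rw [hs]; exact Finset.mem_image_of_mem c (Finset.mem_univ i)
      rw [← himg] at hmem
      obtain ⟨k, _, hk⟩ := Finset.mem_image.mp hmem
      rw [← hk, hptw k (Finset.mem_univ k)]
      exact k.isLt
    set c' : Fin m → Fin m := fun i => ⟨c i, hlt i⟩ with hc'
    have hinj' : Function.Injective c' := by
      intro i j h
      apply hc
      simpa [hc', Fin.ext_iff] using h
    have hbij : Function.Bijective c' := Finite.injective_iff_bijective.mp hinj'
    exact ⟨Equiv.ofBijective c' hbij, fun i => rfl⟩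


variable {m : ℕ}

/-- signed power sum -/
noncomputable def T (x y : Fin m → ℚ) (e : ℕ) : ℚ :=
  ∑ σ : Equiv.Perm (Fin m), ((Equiv.Perm.sign σ : ℤ) : ℚ) * (∑ i, x (σ i) * y i) ^ e

lemma det_pow_zero (x : Fin m → ℚ) {k : Fin m → ℕ} (hk : ¬ Function.Injective k) :
    (Matrix.of fun i j => x i ^ k j).det = 0 := by
  rw [Function.not_injective_iff] at hk
  obtain ⟨i, j, hij, hne⟩ := hk
  exact Matrix.det_zero_of_column_eq hne (fun r => by simp [hij])

lemma T_eq (x y : Fin m → ℚ) (e : ℕ) :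
    T x y e = ∑ k ∈ piAntidiag (Finset.univ : Finset (Fin m)) e,
      (Nat.multinomial Finset.univ k : ℚ) * ((∏ i, y i ^ k i) *
        (Matrix.of fun i j => x i ^ k j).det) := by
  classical
  unfold T
  simp_rw [Finset.sum_pow_eq_sum_piAntidiag, Finset.mul_sum, mul_pow, Finset.prod_mul_distrib]
  rw [Finset.sum_comm]
  refine Finset.sum_congr rfl fun k _ => ?_
  rw [Matrix.det_apply, Finset.mul_sum, Finset.mul_sum]
  refine Finset.sum_congr rfl fun σ _ => ?_
  simp only [Matrix.of_apply, Units.smul_def, zsmul_eq_mul]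
  ring

lemma T_eq_zero (x y : Fin m → ℚ) {e : ℕ} (he : e < ∑ i ∈ range m, i) :
    T x y e = 0 := by
  classical
  rw [T_eq]
  refine Finset.sum_eq_zero fun k hk => ?_
  obtain ⟨hsum, -⟩ := Finset.mem_piAntidiag.mp hk
  have hni : ¬ Function.Injective k := by
    intro hinj
    have h2 := (sum_le_of_injective hinj).1
    rw [show (Finset.univ.sum k) = ∑ i : Fin m, k i from rfl] at hsum
    omega
  rw [det_pow_zero x hni]
  ring

lemma T_eq_top (x y : Fin m → ℚ) :
    T x y (∑ i ∈ range m, i) =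
      (Nat.multinomial Finset.univ (fun i : Fin m => (i : ℕ)) : ℚ) *
        ((Matrix.vandermonde x).det * (Matrix.vandermonde y).det) := by
  classical
  rw [T_eq]
  set Term : (Fin m → ℕ) → ℚ := fun k =>
    (Nat.multinomial Finset.univ k : ℚ) * ((∏ i, y i ^ k i) *
      (Matrix.of fun i j => x i ^ k j).det) with hTerm
  have hfilter : ∑ k ∈ piAntidiag (Finset.univ : Finset (Fin m)) (∑ i ∈ range m, i), Term k
      = ∑ k ∈ (piAntidiag (Finset.univ : Finset (Fin m)) (∑ i ∈ range m, i)).filter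
          (fun k => Function.Injective k), Term k := by
    refine (Finset.sum_filter_of_ne (fun k _ hne => ?_)).symm
    by_contra hni
    exact hne (by rw [hTerm]; simp only; rw [det_pow_zero x hni]; ring)
  have hbij : ∑ k ∈ (piAntidiag (Finset.univ : Finset (Fin m)) (∑ i ∈ range m, i)).filter
        (fun k => Function.Injective k), Term k
      = ∑ τ : Equiv.Perm (Fin m), Term (fun i => ((τ i : Fin m) : ℕ)) := by
    refine (Finset.sum_bij (fun (τ : Equiv.Perm (Fin m)) (_ : τ ∈ Finset.univ) =>
        (fun i => ((τ i : Fin m) : ℕ))) ?_ ?_ ?_ (fun τ _ => rfl)).symm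
    · intro τ _
      refine Finset.mem_filter.mpr ⟨Finset.mem_piAntidiag.mpr ⟨?_, fun i _ => Finset.mem_univ i⟩,
        Fin.val_injective.comp τ.injective⟩
      rw [Equiv.sum_comp τ (fun i : Fin m => (i : ℕ))]
      exact Fin.sum_univ_eq_sum_range (fun i => i) m
    · intro τ1 _ τ2 _ h
      ext i
      exact congrFun h i
    · intro k hk
      obtain ⟨hk1, hk2⟩ := Finset.mem_filter.mp hk
      obtain ⟨hsum, -⟩ := Finset.mem_piAntidiag.mp hk1
      obtain ⟨τ, hτ⟩ := (sum_le_of_injective hk2).2 (by rw [hsum])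
      exact ⟨τ, Finset.mem_univ τ, by funext i; exact (hτ i).symm⟩
  rw [hfilter, hbij]
  have hterm : ∀ τ : Equiv.Perm (Fin m), Term (fun i => ((τ i : Fin m) : ℕ)) =
      (Nat.multinomial Finset.univ (fun i : Fin m => (i : ℕ)) : ℚ) *
        ((Matrix.vandermonde x).det *
          (((Equiv.Perm.sign τ : ℤ) : ℚ) * ∏ i, y i ^ ((τ i : Fin m) : ℕ))) := by
    intro τ
    have hmn : Nat.multinomial Finset.univ (fun i => ((τ i : Fin m) : ℕ)) =
        Nat.multinomial Finset.univ (fun i : Fin m => (i : ℕ)) := by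
      unfold Nat.multinomial
      rw [Equiv.sum_comp τ (fun i : Fin m => (i : ℕ)),
        Equiv.prod_comp τ (fun i : Fin m => Nat.factorial (i : ℕ))]
    have hdet : (Matrix.of fun i j => x i ^ ((τ j : Fin m) : ℕ)).det =
        ((Equiv.Perm.sign τ : ℤ) : ℚ) * (Matrix.vandermonde x).det := by
      have : (Matrix.of fun i j => x i ^ ((τ j : Fin m) : ℕ)) =
          (Matrix.vandermonde x).submatrix id τ := by
        ext i j
        simp [Matrix.vandermonde_apply]
      rw [this, Matrix.det_permute']
    rw [hTerm]
    simp only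
    rw [hmn, hdet]
    ring
  simp_rw [hterm]
  rw [← Finset.mul_sum, ← Finset.mul_sum]
  congr 1
  congr 1
  have hdy : (Matrix.vandermonde y).det =
      ∑ τ : Equiv.Perm (Fin m), ((Equiv.Perm.sign τ : ℤ) : ℚ) * ∏ i, y i ^ ((τ i : Fin m) : ℕ) := by
    rw [← Matrix.det_transpose, Matrix.det_apply]
    refine Finset.sum_congr rfl fun τ _ => ?_
    simp [Matrix.vandermonde_apply, Units.smul_def, zsmul_eq_mul]
  rw [hdy]


lemma cast_descFactorial {j S : ℕ} (h : j ≤ S) :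
    ((S.descFactorial j : ℕ) : ℚ) = ∏ t ∈ range j, ((S : ℚ) - t) := by
  induction j with
  | zero => simp
  | succ j ih =>
      rw [Nat.descFactorial_succ, Finset.prod_range_succ, ← ih (by omega)]
      push_cast [Nat.cast_sub (show j ≤ S by omega)]
      ring

lemma cast_choose_factorial (S j : ℕ) :
    ((S.choose j : ℕ) : ℚ) * (Nat.factorial j : ℚ) = ∏ t ∈ range j, ((S : ℚ) - t) := by
  rcases lt_or_ge S j with h | h
  · rw [Nat.choose_eq_zero_of_lt h]
    rw [Finset.prod_eq_zero (Finset.mem_range.mpr h) (by simp)]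
    simp
  · rw [← cast_descFactorial h, Nat.descFactorial_eq_factorial_mul_choose]
    push_cast
    ring

noncomputable def qpoly (j : ℕ) : Polynomial ℚ := ∏ t ∈ range j, (X - C (t : ℚ))

lemma qpoly_natDegree (j : ℕ) : (qpoly j).natDegree = j := by
  unfold qpoly
  rw [Polynomial.natDegree_prod _ _ (fun t _ => X_sub_C_ne_zero _)]
  simp only [Polynomial.natDegree_X_sub_C]
  simp

lemma qpoly_coeff_self (j : ℕ) : (qpoly j).coeff j = 1 := by
  have hm : (qpoly j).Monic := monic_prod_of_monic _ _ (fun t _ => monic_X_sub_C _)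
  have := hm.leadingCoeff
  rwa [Polynomial.leadingCoeff, qpoly_natDegree] at this

lemma qpoly_eval (j : ℕ) (z : ℚ) : (qpoly j).eval z = ∏ t ∈ range j, (z - t) := by
  unfold qpoly
  simp [Polynomial.eval_prod]

/-- The central identity: signed sums of binomial coefficients of the exponents. -/
lemma signed_choose_sum (x y : Fin m → ℚ) (S : Equiv.Perm (Fin m) → ℕ)
    (hS : ∀ σ, ((S σ : ℕ) : ℚ) = ∑ i, x (σ i) * y i) {j : ℕ}
    (hj : j ≤ ∑ i ∈ range m, i) :
    (∑ σ : Equiv.Perm (Fin m), ((Equiv.Perm.sign σ : ℤ) : ℚ) * ((S σ).choose j : ℚ))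
        * (Nat.factorial j : ℚ)
      = if j = ∑ i ∈ range m, i then T x y j else 0 := by
  classical
  have key : ∀ σ : Equiv.Perm (Fin m),
      ((S σ).choose j : ℚ) * (Nat.factorial j : ℚ)
        = ∑ e ∈ range ((qpoly j).natDegree + 1), (qpoly j).coeff e * (∑ i, x (σ i) * y i) ^ e := by
    intro σ
    rw [cast_choose_factorial, ← qpoly_eval, Polynomial.eval_eq_sum_range, hS]
  rw [Finset.sum_mul]
  simp_rw [mul_assoc, key, Finset.mul_sum]
  rw [Finset.sum_comm]
  have hterm : ∀ e : ℕ,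
      (∑ σ : Equiv.Perm (Fin m), ((Equiv.Perm.sign σ : ℤ) : ℚ) *
        ((qpoly j).coeff e * (∑ i, x (σ i) * y i) ^ e)) = (qpoly j).coeff e * T x y e := by
    intro e
    rw [T, Finset.mul_sum]
    exact Finset.sum_congr rfl fun σ _ => by ring
  simp_rw [hterm, qpoly_natDegree]
  rcases eq_or_lt_of_le hj with hj' | hj'
  · rw [if_pos hj']
    rw [Finset.sum_eq_single_of_mem j (Finset.mem_range.mpr (Nat.lt_succ_self j))]
    · rw [qpoly_coeff_self, one_mul, hj']
    · intro e he hne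
      rw [T_eq_zero x y (by
        have := Finset.mem_range.mp he
        omega)]
      ring
  · rw [if_neg (by omega)]
    refine Finset.sum_eq_zero fun e he => ?_
    rw [T_eq_zero x y (by
      have := Finset.mem_range.mp he
      omega)]
    ring


/-- p does not divide the Vandermonde determinant of distinct residues. -/
lemma not_dvd_vandermonde {p m : ℕ} (hp : p.Prime) (c : Fin m → Fin p)
    (hc : Function.Injective c) :
    ¬ ((p : ℤ) ∣ (Matrix.vandermonde (fun i => ((c i).val : ℤ))).det) := by
  intro hdvd
  have hpZ : Prime (p : ℤ) := Nat.prime_iff_prime_int.mp hp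
  rw [Matrix.det_vandermonde] at hdvd
  rw [Prime.dvd_finset_prod_iff hpZ] at hdvd
  obtain ⟨i, -, hi⟩ := hdvd
  rw [Prime.dvd_finset_prod_iff hpZ] at hi
  obtain ⟨j, hj, hij⟩ := hi
  have hlt : i < j := Finset.mem_Ioi.mp hj
  have hne : (c j).val ≠ (c i).val := by
    intro h
    exact absurd (hc (Fin.ext h)).symm (Fin.ne_of_lt hlt)
  have hdn : p ∣ (((c j).val : ℤ) - ((c i).val : ℤ)).natAbs := by
    have := Int.natAbs_dvd_natAbs.mpr hij
    simpa using this
  have h1 := Nat.le_of_dvd (by omega) hdn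
  have h2 : (c j).val < p := (c j).isLt
  have h3 : (c i).val < p := (c i).isLt
  omega

end ChebAux

open ChebAux

theorem chebotarev {p : ℕ} (hp : p.Prime) (ω : ℂ) (hω : ω ^ p = 1) (hω1 : ω ≠ 1)
    (V : Matrix (Fin p) (Fin p) ℂ) (hV : ∀ i j, V i j = ω ^ (i.val * j.val)) :
    ∀ (m : ℕ) (f g : Fin m → Fin p), 0 < m → Function.Injective f →
      Function.Injective g → (V.submatrix f g).det ≠ 0 := by
  intro m a b hm ha hb hdet
  classical
  haveI : Fact p.Prime := ⟨hp⟩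
  -- basic data
  set d : ℕ := ∑ i ∈ range m, i with hd
  set S : Equiv.Perm (Fin m) → ℕ := fun σ => ∑ i, (a (σ i)).val * (b i).val with hSdef
  set x : Fin m → ℚ := fun i => ((a i).val : ℚ) with hx
  set y : Fin m → ℚ := fun i => ((b i).val : ℚ) with hy
  have hS : ∀ σ, ((S σ : ℕ) : ℚ) = ∑ i, x (σ i) * y i := by
    intro σ
    rw [hSdef]
    push_cast
    rfl
  -- the polynomial F₁ and its coefficients
  set F₁ : Polynomial ℤ := ∑ σ : Equiv.Perm (Fin m),
    C ((Equiv.Perm.sign σ : ℤ)) * (X + 1) ^ S σ with hF₁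
  have hcoeff : ∀ j, F₁.coeff j = ∑ σ : Equiv.Perm (Fin m),
      (Equiv.Perm.sign σ : ℤ) * ((S σ).choose j : ℤ) := by
    intro j
    rw [hF₁, Polynomial.finset_sum_coeff]
    refine Finset.sum_congr rfl fun σ _ => ?_
    rw [Polynomial.coeff_C_mul, Polynomial.coeff_X_add_one_pow]
  have hcoeffQ : ∀ j, j ≤ d → ((F₁.coeff j : ℤ) : ℚ) * (Nat.factorial j : ℚ)
      = if j = d then T x y j else 0 := by
    intro j hj
    rw [← signed_choose_sum x y S hS hj, hcoeff]
    push_cast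
    ring
  have hcoeff_lt : ∀ j < d, F₁.coeff j = 0 := by
    intro j hj
    have h0 := hcoeffQ j (le_of_lt hj)
    rw [if_neg (by omega)] at h0
    have hfac : (Nat.factorial j : ℚ) ≠ 0 := by positivity
    have := (mul_eq_zero.mp h0).resolve_right hfac
    exact_mod_cast this
  -- the value of the d-th coefficient
  set xz : Fin m → ℤ := fun i => ((a i).val : ℤ) with hxz
  set yz : Fin m → ℤ := fun i => ((b i).val : ℤ) with hyz
  have hvx : ((Matrix.vandermonde xz).det : ℚ) = (Matrix.vandermonde x).det := by
    have h1 : ((Matrix.vandermonde xz).map (Int.castRingHom ℚ)) = Matrix.vandermonde x := by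
      ext i j
      simp [Matrix.vandermonde_apply, hxz, hx]
    rw [← h1]
    exact RingHom.map_det (Int.castRingHom ℚ) _
  have hvy : ((Matrix.vandermonde yz).det : ℚ) = (Matrix.vandermonde y).det := by
    have h1 : ((Matrix.vandermonde yz).map (Int.castRingHom ℚ)) = Matrix.vandermonde y := by
      ext i j
      simp [Matrix.vandermonde_apply, hyz, hy]
    rw [← h1]
    exact RingHom.map_det (Int.castRingHom ℚ) _
  have hBd : F₁.coeff d * (∏ i : Fin m, (Nat.factorial (i : ℕ) : ℤ))
      = (Matrix.vandermonde xz).det * (Matrix.vandermonde yz).det := by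
    have h0 := hcoeffQ d le_rfl
    rw [if_pos rfl, T_eq_top] at h0
    have hspec := Nat.multinomial_spec Finset.univ (fun i : Fin m => (i : ℕ))
    have hsum : (∑ i : Fin m, (i : ℕ)) = d := Fin.sum_univ_eq_sum_range (fun i => i) m
    rw [hsum] at hspec
    have hfac : (Nat.factorial d : ℚ) ≠ 0 := by positivity
    have hmul : ((Nat.multinomial Finset.univ (fun i : Fin m => (i : ℕ)) : ℚ) *
        (∏ i : Fin m, (Nat.factorial (i : ℕ) : ℚ))) = (Nat.factorial d : ℚ) := by
      rw [← hspec]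
      push_cast
      ring
    have hQ : ((F₁.coeff d : ℤ) : ℚ) * (∏ i : Fin m, (Nat.factorial (i : ℕ) : ℚ))
        = (Matrix.vandermonde x).det * (Matrix.vandermonde y).det := by
      apply mul_left_cancel₀ hfac
      calc (Nat.factorial d : ℚ) * (((F₁.coeff d : ℤ) : ℚ) *
            (∏ i : Fin m, (Nat.factorial (i : ℕ) : ℚ)))
          = (((F₁.coeff d : ℤ) : ℚ) * (Nat.factorial d : ℚ))
            * (∏ i : Fin m, (Nat.factorial (i : ℕ) : ℚ)) := by ring
        _ = ((Nat.multinomial Finset.univ (fun i : Fin m => (i : ℕ)) : ℚ) *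
              ((Matrix.vandermonde x).det * (Matrix.vandermonde y).det))
            * (∏ i : Fin m, (Nat.factorial (i : ℕ) : ℚ)) := by rw [h0]
        _ = ((Nat.multinomial Finset.univ (fun i : Fin m => (i : ℕ)) : ℚ) *
              (∏ i : Fin m, (Nat.factorial (i : ℕ) : ℚ)))
            * ((Matrix.vandermonde x).det * (Matrix.vandermonde y).det) := by ring
        _ = (Nat.factorial d : ℚ) *
            ((Matrix.vandermonde x).det * (Matrix.vandermonde y).det) := by rw [hmul]
    rw [← hvx, ← hvy] at hQ
    exact_mod_cast hQ
  -- primitive root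
  have hprim : IsPrimitiveRoot ω p := by
    refine ⟨hω, fun l hl => ?_⟩
    have hord : orderOf ω ∣ p := orderOf_dvd_of_pow_eq_one hω
    rcases Nat.Prime.eq_one_or_self_of_dvd hp _ hord with h1 | h1
    · exact absurd (orderOf_eq_one_iff.mp h1) hω1
    · rw [← h1]
      exact orderOf_dvd_of_pow_eq_one hl
  set F : Polynomial ℤ := F₁.comp (X - 1) with hF
  have haevalF : (Polynomial.aeval ω) F = (V.submatrix a b).det := by
    rw [hF, Polynomial.aeval_comp]
    have hω0 : (Polynomial.aeval ω) (X - 1 : Polynomial ℤ) = ω - 1 := by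
      simp
    rw [hω0, hF₁, map_sum, Matrix.det_apply]
    refine Finset.sum_congr rfl fun σ _ => ?_
    rw [map_mul, map_pow, map_add, Polynomial.aeval_X, map_one, Polynomial.aeval_C]
    simp only [Matrix.submatrix_apply, hV]
    rw [Finset.prod_pow_eq_pow_sum]
    rw [sub_add_cancel]
    rw [Units.smul_def, zsmul_eq_mul]
    rfl
  have haeval0 : (Polynomial.aeval ω) F = 0 := by rw [haevalF, hdet]
  have hdvd : Polynomial.cyclotomic p ℤ ∣ F := by
    rw [Polynomial.cyclotomic_eq_minpoly hprim hp.pos]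
    exact minpoly.isIntegrallyClosed_dvd (hprim.isIntegral hp.pos) haeval0
  obtain ⟨G₁, hG₁⟩ : (X : Polynomial ℤ) ^ d ∣ F₁ := Polynomial.X_pow_dvd_iff.mpr hcoeff_lt
  have hFfact : F = (X - 1) ^ d * (G₁.comp (X - 1)) := by
    rw [hF, hG₁, Polynomial.mul_comp, Polynomial.pow_comp, Polynomial.X_comp]
  have hΦ : Prime (Polynomial.cyclotomic p ℤ) :=
    UniqueFactorizationMonoid.irreducible_iff_prime.mp (Polynomial.cyclotomic.irreducible hp.pos)
  rw [hFfact] at hdvd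
  rcases hΦ.2.2 _ _ hdvd with hc1 | hc2
  · have h2 : Polynomial.cyclotomic p ℤ ∣ (X - 1) := hΦ.dvd_of_dvd_pow hc1
    have hne : (X - 1 : Polynomial ℤ) ≠ 0 := by
      intro h
      have := congrArg (Polynomial.eval 0) h
      simp at this
    have hdeg1 : (X - 1 : Polynomial ℤ).natDegree = 1 := by
      simpa using Polynomial.natDegree_X_sub_C (1 : ℤ)
    have h3 := (Polynomial.natDegree_le_of_dvd h2 hne).trans_eq hdeg1
    rw [Polynomial.natDegree_cyclotomic, Nat.totient_prime hp] at h3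
    have hp2 : p = 2 := by have := hp.two_le; omega
    subst hp2
    rw [Polynomial.cyclotomic_two] at h2
    obtain ⟨c, hc⟩ := h2
    have h4 := congrArg (Polynomial.eval (-1 : ℤ)) hc
    simp [Polynomial.eval_mul] at h4
  · obtain ⟨Q, hQ⟩ := hc2
    have hdvdB : (p : ℤ) ∣ F₁.coeff d := by
      have h5 := congrArg (Polynomial.eval (1 : ℤ)) hQ
      rw [Polynomial.eval_mul, Polynomial.eval_one_cyclotomic_prime, Polynomial.eval_comp] at h5
      have h6 : Polynomial.eval (Polynomial.eval 1 (X - 1 : Polynomial ℤ)) G₁ = G₁.eval 0 := by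
        norm_num
      rw [h6] at h5
      have h7 : F₁.coeff d = G₁.eval 0 := by
        rw [hG₁, ← Polynomial.coeff_zero_eq_eval_zero]
        simpa using Polynomial.coeff_X_pow_mul G₁ d 0
      exact ⟨Q.eval 1, by rw [h7, h5]⟩
    have hdvdprod : (p : ℤ) ∣ (Matrix.vandermonde xz).det * (Matrix.vandermonde yz).det := by
      rw [← hBd]
      exact Dvd.dvd.mul_right hdvdB _
    rcases (Nat.prime_iff_prime_int.mp hp).2.2 _ _ hdvdprod with h | h
    · exact not_dvd_vandermonde hp a ha h
    · exact not_dvd_vandermonde hp b hb h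
end

section
/- Let p be a prime, ω ∈ ℂ a primitive p-th root of unity, and F_p the Fourier matrix (ω^{ij}). Then for any subset of r rows of F_p, the linear code over ℂ spanned by those rows has minimum Hamming distance exactly p − r + 1 (i.e., it is an MDS [p, r, p−r+1] code). -/
open Polynomial

noncomputable section Aring
variable (p : ℕ) [Fact p.Prime]

abbrev Acyc := AdjoinRoot (Polynomial.cyclotomic p ℤ)

instance : IsDomain (Acyc p) := by
  have hirr : Irreducible (cyclotomic p ℤ) := cyclotomic.irreducible (Fact.out : p.Prime).pos
  have hprime : Prime (cyclotomic p ℤ) :=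
    UniqueFactorizationMonoid.irreducible_iff_prime.mp hirr
  haveI : (Ideal.span {cyclotomic p ℤ}).IsPrime :=
    (Ideal.span_singleton_prime hprime.ne_zero).mpr hprime
  exact Ideal.Quotient.isDomain _

instance : IsNoetherianRing (Acyc p) := by
  unfold Acyc AdjoinRoot
  exact Ideal.Quotient.isNoetherianRing _

def ηc : Acyc p := AdjoinRoot.root _

def φc : Acyc p →+* ZMod p :=
  AdjoinRoot.lift (Int.castRingHom (ZMod p)) 1 (by
    rw [eval₂_eq_eval_map, map_cyclotomic, eval_one_cyclotomic_prime]
    exact ZMod.natCast_self p)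

theorem φc_η : φc p (ηc p) = 1 := AdjoinRoot.lift_root _

theorem φc_mk (f : ℤ[X]) : φc p (AdjoinRoot.mk _ f) = ((f.eval 1 : ℤ) : ZMod p) := by
  rw [φc, AdjoinRoot.lift_mk, eval₂_at_one]
  rfl

set_option linter.unusedSectionVars false

theorem mk_C (z : ℤ) :
    AdjoinRoot.mk (cyclotomic p ℤ) (Polynomial.C z) = (z : Acyc p) := by simp

theorem mk_XC : AdjoinRoot.mk (cyclotomic p ℤ) (X - Polynomial.C 1) = ηc p - 1 := by
  simp [ηc]

theorem p_mem : ((p : ℤ) : Acyc p) ∈ Ideal.span {ηc p - 1} := by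
  have h1 : (X - Polynomial.C 1 : ℤ[X]) ∣ cyclotomic p ℤ - Polynomial.C ((cyclotomic p ℤ).eval 1) :=
    X_sub_C_dvd_sub_C_eval
  rw [eval_one_cyclotomic_prime] at h1
  obtain ⟨q, hq⟩ := h1
  rw [Ideal.mem_span_singleton]
  refine ⟨-(AdjoinRoot.mk _ q), ?_⟩
  have h2 := congrArg (AdjoinRoot.mk (cyclotomic p ℤ)) hq
  rw [map_sub, map_mul, AdjoinRoot.mk_self, mk_XC, zero_sub, mk_C] at h2
  linear_combination -h2

theorem ker_φc {a : Acyc p} (ha : φc p a = 0) : a ∈ Ideal.span {ηc p - 1} := by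
  obtain ⟨f, rfl⟩ := AdjoinRoot.mk_surjective a
  rw [φc_mk, ZMod.intCast_zmod_eq_zero_iff_dvd] at ha
  obtain ⟨m, hm⟩ := ha
  have h1 : (X - Polynomial.C 1 : ℤ[X]) ∣ f - Polynomial.C (f.eval 1) := X_sub_C_dvd_sub_C_eval
  obtain ⟨q, hq⟩ := h1
  have hsplit : f = (X - Polynomial.C 1) * q + Polynomial.C (f.eval 1) := by linear_combination hq
  rw [hsplit]
  simp only [map_add, map_mul]
  refine Ideal.add_mem _ (Ideal.mul_mem_right _ _ ?_) ?_
  · rw [mk_XC]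
    exact Ideal.subset_span rfl
  · rw [hm, mk_C]
    push_cast
    exact Ideal.mul_mem_right _ _ (p_mem p)

theorem span_ne_top : Ideal.span {ηc p - 1} ≠ ⊤ := by
  haveI : Fact (1 < p) := ⟨(Fact.out : p.Prime).one_lt⟩
  intro htop
  have h1 : (1 : Acyc p) ∈ Ideal.span {ηc p - 1} := htop ▸ Submodule.mem_top
  rw [Ideal.mem_span_singleton] at h1
  obtain ⟨c, hc⟩ := h1
  have := congrArg (φc p) hc
  rw [map_one, map_mul, map_sub, φc_η, map_one, sub_self, zero_mul] at this
  exact one_ne_zero this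

end Aring

noncomputable section Psi
variable {p : ℕ} [Fact p.Prime] {ω : ℂ}

def ψc (hζ : IsPrimitiveRoot ω p) : Acyc p →+* ℂ :=
  AdjoinRoot.lift (Int.castRingHom ℂ) ω (by
    rw [eval₂_eq_eval_map, map_cyclotomic]
    exact hζ.isRoot_cyclotomic (Fact.out : p.Prime).pos)

theorem ψc_η (hζ : IsPrimitiveRoot ω p) : ψc hζ (ηc p) = ω := AdjoinRoot.lift_root _

theorem ψc_inj (hζ : IsPrimitiveRoot ω p) : Function.Injective (ψc hζ) := by
  have hppos := (Fact.out : p.Prime).pos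
  rw [injective_iff_map_eq_zero]
  intro a ha
  obtain ⟨f, rfl⟩ := AdjoinRoot.mk_surjective a
  rw [ψc, AdjoinRoot.lift_mk] at ha
  have haev : (Polynomial.aeval ω) f = 0 := by rwa [aeval_def]
  have hdvd : cyclotomic p ℤ ∣ f := by
    rw [cyclotomic_eq_minpoly hζ hppos]
    exact minpoly.isIntegrallyClosed_dvd (hζ.isIntegral hppos) haev
  rwa [AdjoinRoot.mk_eq_zero]

theorem ηc_pow_inj (hζ : IsPrimitiveRoot ω p) {i j : Fin p}
    (h : ηc p ^ (i : ℕ) = ηc p ^ (j : ℕ)) : i = j := by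
  have := congrArg (ψc hζ) h
  rw [map_pow, map_pow, ψc_η] at this
  exact Fin.ext (hζ.pow_inj i.isLt j.isLt this)

theorem πc_ne_zero (hζ : IsPrimitiveRoot ω p) : ηc p - 1 ≠ 0 := by
  intro h
  have := congrArg (ψc hζ) h
  rw [map_sub, map_one, ψc_η, map_zero, sub_eq_zero] at this
  exact hζ.ne_one (Fact.out : p.Prime).one_lt this

theorem normalize_vec {ι : Type*} (hζ : IsPrimitiveRoot ω p) (d : ι → Acyc p) (j0 : ι)
    (hd : d j0 ≠ 0) :
    ∃ (e : ι → Acyc p) (m : ℕ), (∀ j, d j = (ηc p - 1) ^ m * e j) ∧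
      ∃ j1, e j1 ∉ Ideal.span {ηc p - 1} := by
  classical
  set I : Ideal (Acyc p) := Ideal.span {ηc p - 1} with hI
  have hbound : ∃ m, ¬ ∀ j, d j ∈ I ^ m := by
    by_contra h'
    push_neg at h'
    have : d j0 ∈ (⨅ m : ℕ, I ^ m) := Ideal.mem_iInf.mpr fun m => h' m j0
    rw [Ideal.iInf_pow_eq_bot_of_isDomain (I := I) (hI ▸ span_ne_top p)] at this
    exact hd this
  set m := Nat.find hbound with hm
  have hmpos : 0 < m := by
    rcases Nat.eq_zero_or_pos m with h | h
    · exfalso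
      have := Nat.find_spec hbound
      rw [← hm, h] at this
      exact this fun j => by simp
    · exact h
  have hall : ∀ j, d j ∈ I ^ (m - 1) := by
    by_contra hcon
    exact (Nat.find_min hbound (m := m - 1) (by omega)) hcon
  have hex : ∃ j1, d j1 ∉ I ^ m := not_forall.mp (Nat.find_spec hbound)
  have hdvd : ∀ j, (ηc p - 1) ^ (m - 1) ∣ d j := by
    intro j
    have := hall j
    rwa [hI, Ideal.span_singleton_pow, Ideal.mem_span_singleton] at this
  choose e he using hdvd
  refine ⟨e, m - 1, he, ?_⟩
  obtain ⟨j1, hj1⟩ := hex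
  refine ⟨j1, fun hmem => hj1 ?_⟩
  rw [Ideal.mem_span_singleton] at hmem
  obtain ⟨c, hc⟩ := hmem
  rw [hI, Ideal.span_singleton_pow, Ideal.mem_span_singleton]
  refine ⟨c, ?_⟩
  rw [he j1, hc]
  have : (ηc p - 1) ^ m = (ηc p - 1) ^ (m - 1) * (ηc p - 1) := by
    rw [← pow_succ]
    congr 1
    omega
  rw [this]
  ring

end Psi

noncomputable section Frenkel
variable {p : ℕ} [Fact p.Prime] {ω : ℂ}

theorem lemA' {p : ℕ} (hp : p.Prime) :
    ∀ (n : ℕ) (S : Finset (Fin p)) (e : Fin p → ZMod p), S.card = n →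
    ((X - 1 : (ZMod p)[X]) ^ n ∣ ∑ j ∈ S, Polynomial.C (e j) * X ^ (j : ℕ)) →
    ∀ j ∈ S, e j = 0 := by
  haveI : Fact p.Prime := ⟨hp⟩
  intro n
  induction n with
  | zero => intro S e hS _ j hj; simp [Finset.card_eq_zero.mp hS] at hj
  | succ m IH =>
    intro S e hS hdvd
    obtain ⟨js, hjs⟩ : ∃ js, js ∈ S := Finset.card_pos.mp (by omega) |>.exists_mem
    set f : (ZMod p)[X] := ∑ j ∈ S, Polynomial.C (e j) * X ^ (j : ℕ) with hf
    set e' : Fin p → ZMod p := fun j => e j * (((j : ℕ) : ZMod p) - ((js : ℕ) : ZMod p)) with he'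
    have hXmul : ∀ (a : ZMod p) (k : ℕ), X * (C (a * k) * X ^ (k - 1)) = C (a * k) * X ^ k := by
      intro a k
      cases k with
      | zero => simp
      | succ k => rw [Nat.add_sub_cancel, pow_succ]; ring
    have hg : X * derivative f - C ((js : ℕ) : ZMod p) * f
        = ∑ j ∈ S, Polynomial.C (e' j) * X ^ (j : ℕ) := by
      rw [hf, derivative_sum, Finset.mul_sum, Finset.mul_sum, ← Finset.sum_sub_distrib]
      refine Finset.sum_congr rfl fun j _ => ?_
      rw [derivative_C_mul_X_pow, hXmul, he']
      simp only [mul_sub, C_sub, C_mul]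
      ring
    -- divisibility of g
    obtain ⟨h, hh⟩ := hdvd
    have hf' : (X - 1 : (ZMod p)[X]) ^ m ∣ derivative f := by
      rw [hh, derivative_mul, derivative_pow]
      refine dvd_add (Dvd.dvd.mul_right ?_ _) (Dvd.dvd.mul_right (pow_dvd_pow _ m.le_succ) _)
      exact Dvd.dvd.mul_right (Dvd.dvd.mul_left (dvd_refl _) _) _
    have hfm : (X - 1 : (ZMod p)[X]) ^ m ∣ f := (pow_dvd_pow _ m.le_succ).trans ⟨h, hh⟩
    have hgdvd : (X - 1 : (ZMod p)[X]) ^ m ∣ ∑ j ∈ S.erase js, Polynomial.C (e' j) * X ^ (j : ℕ) := by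
      rw [Finset.sum_erase _ (by simp [he'])]
      rw [← hg]
      exact dvd_sub (hf'.mul_left X) (hfm.mul_left _)
    have hz : ∀ j ∈ S.erase js, e' j = 0 :=
      IH (S.erase js) e' (by rw [Finset.card_erase_of_mem hjs, hS]; rfl) hgdvd
    have hzz : ∀ j ∈ S.erase js, e j = 0 := by
      intro j hj
      have hne : ((j : ℕ) : ZMod p) - ((js : ℕ) : ZMod p) ≠ 0 := by
        rw [sub_ne_zero]
        intro hcast
        exact (Finset.ne_of_mem_erase hj) (Fin.ext (by
          have := congrArg ZMod.val hcast
          rwa [ZMod.val_cast_of_lt j.isLt, ZMod.val_cast_of_lt js.isLt] at this))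
      have := hz j hj
      rw [he'] at this
      exact (mul_eq_zero.mp this).resolve_right hne
    have hfjs : f = Polynomial.C (e js) * X ^ (js : ℕ) := by
      rw [hf]
      refine Finset.sum_eq_single_of_mem js hjs fun j hj hne => ?_
      rw [hzz j (Finset.mem_erase.mpr ⟨hne, hj⟩)]
      simp
    have hejs : e js = 0 := by
      have h1 : (X - 1 : (ZMod p)[X]) ∣ f := (dvd_pow_self _ (Nat.succ_ne_zero m)).trans ⟨h, hh⟩
      obtain ⟨q, hq⟩ := h1
      have := congrArg (Polynomial.eval 1) hq
      rw [hfjs] at this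
      simpa using this
    intro j hj
    rcases eq_or_ne j js with rfl | hne
    · exact hejs
    · exact hzz j (Finset.mem_erase.mpr ⟨hne, hj⟩)

theorem frenkel (hζ : IsPrimitiveRoot ω p) (Rr Cs : Finset (Fin p)) (hcard : Cs.card ≤ Rr.card)
    (d : Fin p → Acyc p) (hsupp : ∀ j ∉ Cs, d j = 0)
    (hrel : ∀ i ∈ Rr, ∑ j ∈ Cs, d j * ηc p ^ ((i : ℕ) * (j : ℕ)) = 0) :
    ∀ j, d j = 0 := by
  classical
  by_contra hcon
  push_neg at hcon
  obtain ⟨j0, hj0⟩ := hcon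
  obtain ⟨e, m, hdm, j1, hj1⟩ := normalize_vec hζ d j0 hj0
  have hπ : (ηc p - 1) ≠ 0 := πc_ne_zero hζ
  have hπm : (ηc p - 1) ^ m ≠ 0 := pow_ne_zero _ hπ
  have hej1 : e j1 ≠ 0 := fun h => hj1 (h ▸ Ideal.zero_mem _)
  have hj1C : j1 ∈ Cs := by
    by_contra h
    exact hej1 (by
      have := hsupp j1 h
      rw [hdm j1] at this
      exact (mul_eq_zero.mp this).resolve_left hπm)
  have hrel' : ∀ i ∈ Rr, ∑ j ∈ Cs, e j * ηc p ^ ((i : ℕ) * (j : ℕ)) = 0 := by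
    intro i hi
    have h0 := hrel i hi
    have : ∑ j ∈ Cs, d j * ηc p ^ ((i : ℕ) * (j : ℕ))
        = (ηc p - 1) ^ m * ∑ j ∈ Cs, e j * ηc p ^ ((i : ℕ) * (j : ℕ)) := by
      rw [Finset.mul_sum]
      exact Finset.sum_congr rfl fun j _ => by rw [hdm j]; ring
    rw [this] at h0
    exact (mul_eq_zero.mp h0).resolve_left hπm
  -- the polynomial g
  set g : (Acyc p)[X] := ∑ j ∈ Cs, Polynomial.C (e j) * X ^ (j : ℕ) with hg
  have hgne : g ≠ 0 := by
    intro h0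
    have hco : g.coeff (j1 : ℕ) = e j1 := by
      rw [hg, finset_sum_coeff]
      rw [Finset.sum_eq_single j1 (fun j _ hne => by
        rw [coeff_C_mul, coeff_X_pow, if_neg (fun hc => hne (Fin.ext (by
          exact_mod_cast hc.symm)))]
        ring) (fun h => absurd hj1C h)]
      rw [coeff_C_mul, coeff_X_pow, if_pos rfl, mul_one]
    rw [h0, coeff_zero] at hco
    exact hej1 hco.symm
  have hroot : ∀ i ∈ Rr, g.IsRoot (ηc p ^ (i : ℕ)) := by
    intro i hi
    rw [IsRoot.def, hg, eval_finset_sum]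
    have := hrel' i hi
    rw [← this]
    refine Finset.sum_congr rfl fun j _ => ?_
    rw [eval_mul, eval_C, eval_pow, eval_X, ← pow_mul]
  set M : Multiset (Acyc p) := Rr.val.map (fun i : Fin p => ηc p ^ (i : ℕ)) with hM
  have hMnodup : M.Nodup := by
    rw [hM]
    refine Multiset.Nodup.map_on ?_ Rr.nodup
    intro i _ j _ h
    exact ηc_pow_inj hζ h
  have hMle : M ≤ g.roots := by
    rw [Multiset.le_iff_count]
    intro a
    by_cases ha : a ∈ M
    · rw [Multiset.count_eq_one_of_mem hMnodup ha]
      rw [Polynomial.count_roots]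
      obtain ⟨i, hi, rfl⟩ := Multiset.mem_map.mp ha
      exact (Polynomial.rootMultiplicity_pos hgne).mpr (hroot i hi)
    · rw [Multiset.count_eq_zero_of_notMem ha]
      exact Nat.zero_le _
  have hdvd : (M.map fun a => X - Polynomial.C a).prod ∣ g :=
    (Multiset.prod_dvd_prod_of_le (Multiset.map_le_map hMle)).trans
      g.prod_multiset_X_sub_C_dvd
  -- map to ZMod p
  have hmapdvd : ((X - 1 : (ZMod p)[X]) ^ Rr.card) ∣
      ∑ j ∈ Cs, Polynomial.C (φc p (e j)) * X ^ (j : ℕ) := by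
    obtain ⟨q, hq⟩ := hdvd
    refine ⟨q.map (φc p), ?_⟩
    have := congrArg (Polynomial.map (φc p)) hq
    rw [Polynomial.map_mul] at this
    have hprodmap : ((M.map fun a => X - Polynomial.C a).prod).map (φc p)
        = (X - 1 : (ZMod p)[X]) ^ Rr.card := by
      rw [Polynomial.map_multiset_prod, Multiset.map_map]
      have : (M.map fun a => ((X - Polynomial.C a).map (φc p))) =
          M.map (fun _ => (X - 1 : (ZMod p)[X])) := by
        refine Multiset.map_congr rfl fun a ha => ?_
        obtain ⟨i, _, rfl⟩ := Multiset.mem_map.mp ha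
        simp [Polynomial.map_sub, map_pow, φc_η]
      rw [Function.comp_def, this, Multiset.map_const', Multiset.prod_replicate, hM,
        Multiset.card_map, Finset.card_def]
    have hgmap : g.map (φc p) = ∑ j ∈ Cs, Polynomial.C (φc p (e j)) * X ^ (j : ℕ) := by
      rw [hg, Polynomial.map_sum]
      refine Finset.sum_congr rfl fun j _ => ?_
      rw [Polynomial.map_mul, Polynomial.map_C, Polynomial.map_pow, Polynomial.map_X]
    rw [hgmap, hprodmap] at this
    exact this
  have hdvd2 : ((X - 1 : (ZMod p)[X]) ^ Cs.card) ∣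
      ∑ j ∈ Cs, Polynomial.C (φc p (e j)) * X ^ (j : ℕ) :=
    (pow_dvd_pow _ hcard).trans hmapdvd
  have := lemA' (Fact.out : p.Prime) Cs.card Cs (fun j => φc p (e j)) rfl hdvd2 j1 hj1C
  exact hj1 (ker_φc p this)

end Frenkel

noncomputable section Cheb
variable {p : ℕ} [Fact p.Prime] {ω : ℂ}

theorem cheb (hζ : IsPrimitiveRoot ω p) (Rs Cr : Finset (Fin p)) (hcard : Rs.card ≤ Cr.card)
    (c : Fin p → ℂ) (hsupp : ∀ i ∉ Rs, c i = 0)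
    (hrel : ∀ j ∈ Cr, ∑ i ∈ Rs, c i * ω ^ ((i : ℕ) * (j : ℕ)) = 0) : c = 0 := by
  classical
  obtain ⟨C', hC'sub, hC'card⟩ := Finset.exists_subset_card_eq hcard
  have hcards : Fintype.card ↥Rs = Fintype.card ↥C' := by
    rw [Fintype.card_coe, Fintype.card_coe, hC'card]
  set e : ↥Rs ≃ ↥C' := Fintype.equivOfCardEq hcards with he
  set N : Matrix ↥Rs ↥Rs (Acyc p) :=
    fun k l => ηc p ^ (((l : Fin p) : ℕ) * (((e k : Fin p)) : ℕ)) with hN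
  have hdet : N.det ≠ 0 := by
    intro h0
    obtain ⟨w, hw0, hwv⟩ := (Matrix.exists_mulVec_eq_zero_iff).mpr h0
    set d : Fin p → Acyc p := fun i => if h : i ∈ Rs then w ⟨i, h⟩ else 0 with hd
    have hdz : ∀ j, d j = 0 := by
      refine frenkel hζ C' Rs (le_of_eq hC'card.symm) d
        (fun j hj => by rw [hd]; exact dif_neg hj) ?_
      intro i hi
      have hk := congrFun hwv (e.symm ⟨i, hi⟩)
      rw [Matrix.mulVec, Pi.zero_apply] at hk
      rw [← hk]
      rw [dotProduct]
      rw [← Finset.sum_attach Rs (fun j => d j * ηc p ^ ((i : ℕ) * (j : ℕ)))]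
      rw [Finset.univ_eq_attach] at *
      refine Finset.sum_congr rfl fun l _ => ?_
      simp only [hd, hN, Equiv.apply_symm_apply, dif_pos l.prop, Subtype.coe_eta]
      rw [mul_comm ((i:ℕ)) _, mul_comm]
    refine hw0 (funext fun l => ?_)
    have := hdz (l : Fin p)
    simp only [hd, dif_pos l.prop, Subtype.coe_eta] at this
    simpa using this
  have hdetC : (Matrix.of fun k l => ω ^ (((l : Fin p) : ℕ) * (((e k : Fin p)) : ℕ)) :
      Matrix ↥Rs ↥Rs ℂ).det ≠ 0 := by
    have hmap : (Matrix.of fun k l => ω ^ (((l : Fin p) : ℕ) * (((e k : Fin p)) : ℕ)) :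
        Matrix ↥Rs ↥Rs ℂ) = (ψc hζ).mapMatrix N := by
      ext k l
      rw [hN]
      simp [RingHom.mapMatrix_apply, Matrix.map_apply, map_pow, ψc_η]
      change ω ^ _ = ψc hζ (ηc p ^ _)
      rw [map_pow, ψc_η]
    rw [hmap]
    intro h0
    rw [← RingHom.map_det] at h0
    exact hdet (ψc_inj hζ (by rw [h0, map_zero]))
  set v : ↥Rs → ℂ := fun l => c (l : Fin p) with hv
  have hNv : (Matrix.of fun k l => ω ^ (((l : Fin p) : ℕ) * (((e k : Fin p)) : ℕ)) :
      Matrix ↥Rs ↥Rs ℂ).mulVec v = 0 := by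
    funext k
    rw [Matrix.mulVec, Pi.zero_apply, dotProduct]
    have hj : ((e k : Fin p)) ∈ Cr := hC'sub (e k).prop
    have := hrel _ hj
    rw [← Finset.sum_attach Rs (fun i => c i * ω ^ ((i : ℕ) * (((e k : Fin p)) : ℕ)))] at this
    rw [Finset.univ_eq_attach, ← this]
    refine Finset.sum_congr rfl fun l _ => ?_
    rw [hv, Matrix.of_apply, mul_comm]
  have hveq : v = 0 := Matrix.eq_zero_of_mulVec_eq_zero hdetC hNv
  funext i
  by_cases hi : i ∈ Rs
  · have := congrFun hveq ⟨i, hi⟩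
    simpa using this
  · simpa using hsupp i hi

end Cheb

theorem fourier_rows_mds {p r : ℕ} (hp : p.Prime) (ω : ℂ) (hω : ω ^ p = 1) (hω1 : ω ≠ 1)
    (F : Matrix (Fin p) (Fin p) ℂ) (hF : ∀ i j, F i j = ω ^ (i.val * j.val))
    (R : Finset (Fin p)) (hR : R.card = r) (hr : 0 < r) :
    (∀ u : Fin p → ℂ, u ∈ Submodule.span ℂ ((fun i => F i) '' (R : Set (Fin p))) →
      u ≠ 0 → p - r + 1 ≤ hammingNorm u) ∧
    (∃ u : Fin p → ℂ, u ∈ Submodule.span ℂ ((fun i => F i) '' (R : Set (Fin p))) ∧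
      u ≠ 0 ∧ hammingNorm u = p - r + 1) := by
  classical
  haveI : Fact p.Prime := ⟨hp⟩
  have hζ : IsPrimitiveRoot ω p := by
    have h1 : orderOf ω ∣ p := orderOf_dvd_of_pow_eq_one hω
    rcases (Nat.Prime.eq_one_or_self_of_dvd hp _ h1) with h | h
    · exact absurd (orderOf_eq_one_iff.mp h) hω1
    · exact h ▸ IsPrimitiveRoot.orderOf ω
  have hrp : r ≤ p := by
    rw [← hR]
    simpa using R.card_le_univ
  -- representation of span elements
  have hrep : ∀ u : Fin p → ℂ, u ∈ Submodule.span ℂ ((fun i => F i) '' (R : Set (Fin p))) →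
      ∃ c : Fin p → ℂ, (∀ i ∉ R, c i = 0) ∧ ∀ j, u j = ∑ i ∈ R, c i * ω ^ ((i : ℕ) * (j : ℕ)) := by
    intro u hu
    obtain ⟨l, hl, rfl⟩ := (Finsupp.mem_span_image_iff_linearCombination ℂ).mp hu
    refine ⟨l, fun i hi => Finsupp.notMem_support_iff.mp
      (fun hmem => hi (Finsupp.mem_supported ℂ l |>.mp hl hmem)), fun j => ?_⟩
    rw [Finsupp.linearCombination_apply, Finsupp.sum]
    rw [Finset.sum_apply]
    rw [Finset.sum_subset (Finsupp.mem_supported ℂ l |>.mp hl)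
      (fun i _ hni => by rw [Finsupp.notMem_support_iff.mp hni]; simp)]
    refine Finset.sum_congr rfl fun i _ => ?_
    simp [hF]
  -- norm as filter card
  have hnorm : ∀ u : Fin p → ℂ, hammingNorm u = (Finset.univ.filter fun j => u j ≠ 0).card := by
    intro u
    rw [hammingNorm]
  -- Part 1: lower bound
  have part1 : ∀ u : Fin p → ℂ, u ∈ Submodule.span ℂ ((fun i => F i) '' (R : Set (Fin p))) →
      u ≠ 0 → p - r + 1 ≤ hammingNorm u := by
    intro u hu hune
    obtain ⟨c, hcsupp, hceq⟩ := hrep u hu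
    by_contra hlt
    push_neg at hlt
    have hnle : hammingNorm u ≤ p - r := by omega
    set Z : Finset (Fin p) := Finset.univ.filter (fun j => u j = 0) with hZ
    have hZcard : r ≤ Z.card := by
      have hsplit : Z.card + (Finset.univ.filter fun j => ¬ (u j = 0)).card
          = Fintype.card (Fin p) := by
        rw [hZ]
        rw [Finset.card_filter_add_card_filter_not]
        exact Finset.card_univ
      have : (Finset.univ.filter fun j => ¬ (u j = 0)).card = hammingNorm u := by
        rw [hnorm u]
      rw [Fintype.card_fin] at hsplit
      omega
    have hc0 : c = 0 := by
      refine cheb hζ R Z (hR ▸ hZcard) c hcsupp fun j hj => ?_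
      rw [← hceq j]
      exact (Finset.mem_filter.mp hj).2
    refine hune (funext fun j => ?_)
    rw [hceq j, hc0]
    simp
  refine ⟨part1, ?_⟩
  -- Part 2: existence
  obtain ⟨C₀, hC₀sub, hC₀card⟩ := Finset.exists_subset_card_eq
    (show r - 1 ≤ (Finset.univ : Finset (Fin p)).card by
      rw [Finset.card_univ, Fintype.card_fin]; omega)
  set T : Matrix ↥C₀ ↥R ℂ := Matrix.of fun jj ii => ω ^ (((ii : Fin p) : ℕ) * ((jj : Fin p) : ℕ))
    with hT
  have hker : ∃ v : ↥R → ℂ, v ≠ 0 ∧ T.mulVec v = 0 := by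
    by_contra hcon
    push_neg at hcon
    have hinj : Function.Injective T.mulVecLin := by
      rw [← LinearMap.ker_eq_bot]
      rw [Submodule.eq_bot_iff]
      intro v hv
      by_contra hv0
      exact hcon v hv0 hv
    have hle := LinearMap.finrank_le_finrank_of_injective hinj
    rw [Module.finrank_pi ℂ, Module.finrank_pi ℂ, Fintype.card_coe, Fintype.card_coe,
      hR, hC₀card] at hle
    omega
  obtain ⟨v, hv0, hvz⟩ := hker
  set c : Fin p → ℂ := fun i => if h : i ∈ R then v ⟨i, h⟩ else 0 with hc
  set u : Fin p → ℂ := ∑ i ∈ R, c i • F i with hu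
  have hueval : ∀ j, u j = ∑ i ∈ R, c i * ω ^ ((i : ℕ) * (j : ℕ)) := by
    intro j
    rw [hu, Finset.sum_apply]
    refine Finset.sum_congr rfl fun i _ => ?_
    simp [hF]
  have humem : u ∈ Submodule.span ℂ ((fun i => F i) '' (R : Set (Fin p))) := by
    rw [hu]
    refine Submodule.sum_mem _ fun i hi => Submodule.smul_mem _ _ (Submodule.subset_span ?_)
    exact ⟨i, hi, rfl⟩
  have huC₀ : ∀ j ∈ C₀, u j = 0 := by
    intro j hj
    rw [hueval j]
    have := congrFun hvz ⟨j, hj⟩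
    rw [Matrix.mulVec, Pi.zero_apply, dotProduct] at this
    rw [← Finset.sum_attach R (fun i => c i * ω ^ ((i : ℕ) * (j : ℕ))), Finset.univ_eq_attach] at *
    rw [← this]
    refine Finset.sum_congr rfl fun l _ => ?_
    simp only [hc, hT, dif_pos l.prop, Subtype.coe_eta, Matrix.of_apply]
    rw [mul_comm]
  have hune : u ≠ 0 := by
    intro h0
    have hcz : c = 0 := by
      refine cheb hζ R Finset.univ (by rw [hR, Finset.card_univ, Fintype.card_fin]; omega) c
        (fun i hi => by rw [hc]; exact dif_neg hi) fun j _ => ?_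
      rw [← hueval j, h0]
      rfl
    refine hv0 (funext fun l => ?_)
    have := congrFun hcz (l : Fin p)
    simp only [hc, dif_pos l.prop, Subtype.coe_eta] at this
    simpa using this
  have hnle : hammingNorm u ≤ p - r + 1 := by
    rw [hnorm u]
    have hsub : (Finset.univ.filter fun j => u j ≠ 0) ⊆ Finset.univ \ C₀ := by
      intro j hj
      rw [Finset.mem_sdiff]
      refine ⟨Finset.mem_univ _, fun hjc => ?_⟩
      exact (Finset.mem_filter.mp hj).2 (huC₀ j hjc)
    have := Finset.card_le_card hsub
    rw [Finset.card_sdiff_of_subset (Finset.subset_univ _), Finset.card_univ, Fintype.card_fin,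
      hC₀card] at this
    omega
  exact ⟨u, humem, hune, le_antisymm hnle (part1 u humem hune)⟩
end

section
/- Let {E₁, …, E_n} be a complete orthogonal set of idempotents in K^{n×n} and let F be the n×n matrix whose columns are the first columns of E₁, …, E_n. Suppose every square submatrix of F has nonzero determinant. Let G be the sum of some r of the E_i and H the sum of the remaining n−r. Then every nonzero vector u ∈ K^n with uH = 0 has Hamming weight at least n−r+1. -/
theorem idempotent_code_mds {n r : ℕ} {K : Type*} [Field K] [DecidableEq K] [NeZero n]
    (E : Fin n → Matrix (Fin n) (Fin n) K)
    (hidem : ∀ i, E i * E i = E i)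
    (horth : ∀ i j, i ≠ j → E i * E j = 0)
    (hsum : ∑ i, E i = 1)
    (F : Matrix (Fin n) (Fin n) K) (hF : ∀ i j, F i j = E j i 0)
    (hcheb : ∀ (m : ℕ) (f g : Fin m → Fin n), 0 < m → Function.Injective f →
      Function.Injective g → (F.submatrix f g).det ≠ 0)
    (J : Finset (Fin n)) (hJ : J.card = n - r)
    (H : Matrix (Fin n) (Fin n) K) (hH : H = ∑ j ∈ J, E j)
    (u : Fin n → K) (hu0 : u ≠ 0) (huH : Matrix.vecMul u H = 0) :
    n - r + 1 ≤ hammingNorm u := by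
  by_contra hcon
  push_neg at hcon
  -- key: u E_j = 0 for j ∈ J
  have hEj : ∀ j ∈ J, Matrix.vecMul u (E j) = 0 := by
    intro j hj
    have hHE : H * E j = E j := by
      rw [hH, Finset.sum_mul, Finset.sum_eq_single j]
      · exact hidem j
      · intro k _ hkj; exact horth k j hkj
      · intro h; exact absurd hj h
    calc Matrix.vecMul u (E j) = Matrix.vecMul u (H * E j) := by rw [hHE]
    _ = Matrix.vecMul (Matrix.vecMul u H) (E j) := (Matrix.vecMul_vecMul u H (E j)).symm
    _ = 0 := by rw [huH]; simp
  have hcol : ∀ j ∈ J, ∑ i, u i * F i j = 0 := by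
    intro j hj
    have h0 := congrFun (hEj j hj) 0
    simpa [Matrix.vecMul, dotProduct, hF] using h0
  set m := hammingNorm u with hm
  set S : Finset (Fin n) := Finset.univ.filter (fun i => u i ≠ 0) with hS
  have hScard : S.card = m := rfl
  have hm1 : 0 < m := by
    rw [hm, Nat.pos_iff_ne_zero]
    simpa using hu0
  have hmJ : m ≤ J.card := by omega
  obtain ⟨J', hJ'sub, hJ'card⟩ := Finset.exists_subset_card_eq hmJ
  set f : Fin m → Fin n := fun i => S.orderIsoOfFin hScard i with hf
  set g : Fin m → Fin n := fun i => J'.orderIsoOfFin hJ'card i with hg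
  have hfinj : Function.Injective f := fun a b hab =>
    (S.orderIsoOfFin hScard).injective (Subtype.ext hab)
  have hginj : Function.Injective g := fun a b hab =>
    (J'.orderIsoOfFin hJ'card).injective (Subtype.ext hab)
  have hdet := hcheb m f g hm1 hfinj hginj
  set w : Fin m → K := fun i => u (f i) with hw
  have hwM : Matrix.vecMul w (F.submatrix f g) = 0 := by
    funext j
    have hgj : g j ∈ J := hJ'sub (J'.orderIsoOfFin hJ'card j).2
    have key := hcol (g j) hgj
    have h1 : ∑ i : Fin m, u (f i) * F (f i) (g j)
        = ∑ x ∈ S, u x * F x (g j) := by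
      rw [← Finset.sum_coe_sort S (fun x => u x * F x (g j))]
      exact Fintype.sum_equiv (S.orderIsoOfFin hScard).toEquiv _ _ (fun i => rfl)
    have h2 : ∑ x ∈ S, u x * F x (g j) = ∑ x, u x * F x (g j) := by
      apply Finset.sum_subset (Finset.subset_univ S)
      intro x _ hx
      have : u x = 0 := by
        by_contra hux
        exact hx (Finset.mem_filter.mpr ⟨Finset.mem_univ x, hux⟩)
      simp [this]
    simp only [Matrix.vecMul, dotProduct, Matrix.submatrix_apply, Pi.zero_apply]
    rw [show (fun i => w i * F (f i) (g j)) = fun i => u (f i) * F (f i) (g j) from rfl] at *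
    calc ∑ i : Fin m, w i * F (f i) (g j)
        = ∑ i : Fin m, u (f i) * F (f i) (g j) := rfl
      _ = ∑ x, u x * F x (g j) := by rw [h1, h2]
      _ = 0 := key
  have hwzero : w = 0 := by
    calc w = Matrix.vecMul w 1 := by simp
    _ = Matrix.vecMul w ((F.submatrix f g) * (F.submatrix f g)⁻¹) := by
        rw [Matrix.mul_nonsing_inv _ (isUnit_iff_ne_zero.mpr hdet)]
    _ = Matrix.vecMul (Matrix.vecMul w (F.submatrix f g)) (F.submatrix f g)⁻¹ := by
        rw [Matrix.vecMul_vecMul]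
    _ = 0 := by rw [hwM]; simp
  have hmem : f ⟨0, hm1⟩ ∈ S := (S.orderIsoOfFin hScard ⟨0, hm1⟩).2
  have : u (f ⟨0, hm1⟩) = 0 := congrFun hwzero ⟨0, hm1⟩
  exact (Finset.mem_filter.mp hmem).2 this
end
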